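/- All zeros of K are real, and they are exactly the points −μ_j, j ≥ 1, interlacing with the poles: b_1 < μ_1 < b_2 < μ_2 < b_3 < ⋯ . That is, K has exactly one zero in each open interval (−b_{j+1}, −b_j), j ≥ 1, and no other zeros in its domain. -/

import Mathlib

open Filter Topology

/- Indexing convention: the paper's sequences `(a_k)_{k ≥ 1}`, `(b_k)_{k ≥ 1}` are
encoded as functions `a b : ℕ → ℝ`, where index `k : ℕ` corresponds to the paper's
index `k + 1` (so `b 0 = b_1`, etc.). -/

/-- `GPK a b z = K(z) = ∑ a_k / (z + b_k)`. -/
noncomputable def GPK (a b : ℕ → ℝ) (z : ℂ) : ℂ := ∑' k : ℕ, (a k : ℂ) / (z + (b k : ℂ))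

/-- `GPG a b n z = G_n(z) = z + n² K(z)`. -/
noncomputable def GPG (a b : ℕ → ℝ) (n : ℕ) (z : ℂ) : ℂ := z + (n : ℂ) ^ 2 * GPK a b z

section aux

variable {a b : ℕ → ℝ} {α : ℝ}

private lemma GP_summable (ha : ∀ k, 0 < a k) (hsum : HasSum a (α ^ 2))
    (hbtop : Tendsto b atTop atTop) (x : ℝ) :
    Summable fun k => a k / (x + b k) := by
  refine Summable.of_norm_bounded_eventually_nat hsum.summable ?_
  filter_upwards [hbtop.eventually_ge_atTop (|x| + 1)] with k hk
  have hx : -|x| ≤ x := neg_abs_le x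
  have h1 : (1 : ℝ) ≤ x + b k := by linarith
  rw [Real.norm_eq_abs, abs_div, abs_of_pos (ha k), abs_of_pos (by linarith : (0:ℝ) < x + b k)]
  exact div_le_self (ha k).le h1

private lemma GP_summableC (ha : ∀ k, 0 < a k) (hsum : HasSum a (α ^ 2))
    (hbtop : Tendsto b atTop atTop) (z : ℂ) :
    Summable fun k => (a k : ℂ) / (z + (b k : ℂ)) := by
  refine Summable.of_norm_bounded_eventually_nat hsum.summable ?_
  filter_upwards [hbtop.eventually_ge_atTop (‖z‖ + 1)] with k hk
  have hre : -‖z‖ ≤ z.re := by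
    have := Complex.abs_re_le_norm z
    cases abs_le.mp this with
    | intro h1 h2 => exact h1
  have h1 : (1 : ℝ) ≤ ‖z + (b k : ℂ)‖ := by
    have h2 : (z + (b k : ℂ)).re ≤ ‖z + (b k : ℂ)‖ := by
      exact Complex.re_le_norm _
    have h3 : (z + (b k : ℂ)).re = z.re + b k := by simp
    linarith [h3 ▸ h2]
  rw [norm_div, Complex.norm_real, Real.norm_eq_abs, abs_of_pos (ha k)]
  calc a k / ‖z + (b k : ℂ)‖ ≤ a k / 1 := by
        apply div_le_div_of_nonneg_left (ha k).le one_pos h1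
    _ = a k := div_one _

private lemma GP_summable_normSq (ha : ∀ k, 0 < a k) (hsum : HasSum a (α ^ 2))
    (hbtop : Tendsto b atTop atTop) (z : ℂ) :
    Summable fun k => a k / Complex.normSq (z + (b k : ℂ)) := by
  refine Summable.of_norm_bounded_eventually_nat hsum.summable ?_
  filter_upwards [hbtop.eventually_ge_atTop (‖z‖ + 1)] with k hk
  have hre : -‖z‖ ≤ z.re := by
    have := Complex.abs_re_le_norm z
    cases abs_le.mp this with
    | intro h1 h2 => exact h1
  have h1 : (1 : ℝ) ≤ ‖z + (b k : ℂ)‖ := by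
    have h2 : (z + (b k : ℂ)).re ≤ ‖z + (b k : ℂ)‖ := by
      exact Complex.re_le_norm _
    have h3 : (z + (b k : ℂ)).re = z.re + b k := by simp
    linarith [h3 ▸ h2]
  have h2 : (1 : ℝ) ≤ Complex.normSq (z + (b k : ℂ)) := by
    rw [Complex.normSq_eq_norm_sq]
    nlinarith
  rw [Real.norm_eq_abs, abs_div, abs_of_pos (ha k),
    abs_of_pos (by linarith : (0:ℝ) < Complex.normSq (z + (b k : ℂ)))]
  exact div_le_self (ha k).le h2

/-- Continuity of `K` on a real interval avoiding the poles. -/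
private lemma GP_contOn (ha : ∀ k, 0 < a k) (hsum : HasSum a (α ^ 2))
    (hbtop : Tendsto b atTop atTop) {p q : ℝ}
    (hsep : ∀ k, -b k < p ∨ q < -b k) :
    ContinuousOn (fun x => ∑' k, a k / (x + b k)) (Set.Icc p q) := by
  set δ : ℕ → ℝ := fun k => if -b k < p then p + b k else -(q + b k) with hδ
  have hδpos : ∀ k, 0 < δ k := by
    intro k
    simp only [hδ]
    rcases hsep k with h | h
    · rw [if_pos h]; linarith
    · rcases lt_or_ge (-b k) p with h2 | h2
      · rw [if_pos h2]; linarith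
      · rw [if_neg (not_lt.mpr h2)]; linarith
  have hδle : ∀ k, ∀ x ∈ Set.Icc p q, δ k ≤ |x + b k| := by
    intro k x hx
    simp only [hδ]
    rcases lt_or_ge (-b k) p with h2 | h2
    · rw [if_pos h2, abs_of_pos (by linarith [hx.1] : (0:ℝ) < x + b k)]
      linarith [hx.1]
    · rw [if_neg (not_lt.mpr h2)]
      rcases hsep k with h | h
      · linarith
      · rw [abs_of_neg (by linarith [hx.2] : x + b k < 0)]
        linarith [hx.2]
  have hne : ∀ k, ∀ x ∈ Set.Icc p q, x + b k ≠ 0 := by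
    intro k x hx h
    have := hδle k x hx
    rw [h, abs_zero] at this
    linarith [hδpos k]
  have husum : Summable (fun k => a k / δ k) := by
    refine Summable.of_norm_bounded_eventually_nat hsum.summable ?_
    filter_upwards [hbtop.eventually_ge_atTop (|p| + 1)] with k hk
    have hp : -|p| ≤ p := neg_abs_le p
    have h2 : -b k < p := by linarith
    have h3 : (1:ℝ) ≤ δ k := by simp only [hδ]; rw [if_pos h2]; linarith
    rw [Real.norm_eq_abs, abs_div, abs_of_pos (ha k), abs_of_pos (by linarith : (0:ℝ) < δ k)]
    exact div_le_self (ha k).le h3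
  refine continuousOn_tsum (fun k => ?_) husum (fun k x hx => ?_)
  · exact continuousOn_const.div (by fun_prop) (fun x hx => hne k x hx)
  · rw [Real.norm_eq_abs, abs_div, abs_of_pos (ha k)]
    exact div_le_div_of_nonneg_left (ha k).le (hδpos k) (hδle k x hx)

/-- Bound for the sum with one term removed, on an interval separated from
all the other poles. -/
private lemma GP_rest (ha : ∀ k, 0 < a k) (hsum : HasSum a (α ^ 2))
    (hbtop : Tendsto b atTop atTop) {p q : ℝ} (i : ℕ)
    (hsep : ∀ k, k ≠ i → -b k < p ∨ q < -b k) :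
    ∃ C : ℝ, 0 ≤ C ∧ ∀ x ∈ Set.Icc p q,
      |∑' k, if k = i then 0 else a k / (x + b k)| ≤ C := by
  classical
  set δ : ℕ → ℝ := fun k => if -b k < p then p + b k else -(q + b k) with hδ
  set u : ℕ → ℝ := fun k => if k = i then 0 else a k / δ k with hu
  have hδpos : ∀ k, k ≠ i → 0 < δ k := by
    intro k hki
    simp only [hδ]
    rcases lt_or_ge (-b k) p with h2 | h2
    · rw [if_pos h2]; linarith
    · rw [if_neg (not_lt.mpr h2)]
      rcases hsep k hki with h | h
      · linarith
      · linarith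
  have husum : Summable u := by
    refine Summable.of_norm_bounded_eventually_nat hsum.summable ?_
    filter_upwards [hbtop.eventually_ge_atTop (|p| + 1)] with k hk
    have hp : -|p| ≤ p := neg_abs_le p
    have h2 : -b k < p := by linarith
    simp only [hu]
    by_cases hki : k = i
    · rw [if_pos hki]; simp [(ha k).le]
    · rw [if_neg hki]
      have h3 : (1:ℝ) ≤ δ k := by simp only [hδ]; rw [if_pos h2]; linarith
      rw [Real.norm_eq_abs, abs_div, abs_of_pos (ha k), abs_of_pos (by linarith : (0:ℝ) < δ k)]
      exact div_le_self (ha k).le h3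
  refine ⟨∑' k, u k, tsum_nonneg ?_, fun x hx => ?_⟩
  · intro k
    simp only [hu]
    by_cases hki : k = i
    · simp [hki]
    · rw [if_neg hki]
      exact div_nonneg (ha k).le (hδpos k hki).le
  · have hbound : ∀ k, ‖if k = i then (0:ℝ) else a k / (x + b k)‖ ≤ u k := by
      intro k
      simp only [hu]
      by_cases hki : k = i
      · simp [hki]
      · rw [if_neg hki, if_neg hki, Real.norm_eq_abs, abs_div, abs_of_pos (ha k)]
        have hδx : δ k ≤ |x + b k| := by
          simp only [hδ]
          rcases lt_or_ge (-b k) p with h2 | h2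
          · rw [if_pos h2, abs_of_pos (by linarith [hx.1] : (0:ℝ) < x + b k)]
            linarith [hx.1]
          · rw [if_neg (not_lt.mpr h2)]
            rcases hsep k hki with h | h
            · linarith
            · rw [abs_of_neg (by linarith [hx.2] : x + b k < 0)]
              linarith [hx.2]
        exact div_le_div_of_nonneg_left (ha k).le (hδpos k hki) hδx
    have := tsum_of_norm_bounded husum.hasSum hbound
    rwa [Real.norm_eq_abs] at this

private lemma GP_nonpole (hbmono : StrictMono b) {j : ℕ} {x : ℝ}
    (hx : x ∈ Set.Ioo (-(b (j + 1))) (-(b j))) (k : ℕ) : x + b k ≠ 0 := by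
  rcases le_or_gt k j with hk | hk
  · have := hbmono.monotone hk
    have : x + b k < 0 := by linarith [hx.2]
    linarith
  · have := hbmono.monotone hk
    have : 0 < x + b k := by linarith [hx.1]
    linarith

/-- Strict antitonicity of the real sum on each interval between consecutive poles. -/
private lemma GP_anti (ha : ∀ k, 0 < a k) (hsum : HasSum a (α ^ 2))
    (hbmono : StrictMono b) (hbtop : Tendsto b atTop atTop) (j : ℕ) :
    StrictAntiOn (fun x => ∑' k, a k / (x + b k))
      (Set.Ioo (-(b (j + 1))) (-(b j))) := by
  intro x hx y hy hxy
  have hSx := GP_summable ha hsum hbtop x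
  have hSy := GP_summable ha hsum hbtop y
  have key : ∀ k, 0 < a k / (x + b k) - a k / (y + b k) := by
    intro k
    have hd : 0 < (x + b k) * (y + b k) := by
      rcases le_or_gt k j with hk | hk
      · have hbk : b k ≤ b j := hbmono.monotone hk
        exact mul_pos_of_neg_of_neg (by linarith [hy.2]) (by linarith [hy.2])
      · have hbk : b (j + 1) ≤ b k := hbmono.monotone hk
        exact mul_pos (by linarith [hx.1]) (by linarith [hx.1])
    have hx0 : x + b k ≠ 0 := by
      intro h; rw [h, zero_mul] at hd; exact lt_irrefl 0 hd
    have hy0 : y + b k ≠ 0 := by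
      intro h; rw [h, mul_zero] at hd; exact lt_irrefl 0 hd
    rw [div_sub_div _ _ hx0 hy0]
    exact div_pos (by nlinarith [ha k]) hd
  have hpos : 0 < ∑' k, (a k / (x + b k) - a k / (y + b k)) :=
    Summable.tsum_pos (hSx.sub hSy) (fun k => (key k).le) 0 (key 0)
  rw [Summable.tsum_sub hSx hSy] at hpos
  dsimp only
  linarith

/-- Existence of a zero in each interval between consecutive poles. -/
private lemma GP_exists_zero (ha : ∀ k, 0 < a k) (hsum : HasSum a (α ^ 2))
    (hbmono : StrictMono b) (hbtop : Tendsto b atTop atTop) (j : ℕ) :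
    ∃ x ∈ Set.Ioo (-(b (j + 1))) (-(b j)), (∑' k, a k / (x + b k)) = 0 := by
  classical
  have hbj : b j < b (j + 1) := hbmono (Nat.lt_succ_self j)
  set p := -(b (j + 1)) with hp
  set q := -(b j) with hq
  have hpq : p < q := by rw [hp, hq]; linarith
  set m := (p + q) / 2 with hm
  have hm1 : p < m := by rw [hm]; linarith
  have hm2 : m < q := by rw [hm]; linarith
  -- left point with positive value
  obtain ⟨C₁, hC₁0, hC₁⟩ := GP_rest ha hsum hbtop (p := p) (q := m) (j + 1) (by
    intro k hki
    rcases le_or_gt k j with hk | hk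
    · right
      have : b k ≤ b j := hbmono.monotone hk
      linarith
    · left
      have hk2 : j + 2 ≤ k := by omega
      have : b (j + 2) ≤ b k := hbmono.monotone hk2
      have h2 : b (j + 1) < b (j + 2) := hbmono (Nat.lt_succ_self _)
      rw [hp]; linarith)
  set δ₁ := min (m - p) (a (j + 1) / (C₁ + 1)) with hδ₁def
  have hδ₁ : 0 < δ₁ := lt_min (by linarith) (div_pos (ha _) (by linarith))
  set x₁ := p + δ₁ with hx₁def
  have hx₁m : x₁ ≤ m := by
    have := min_le_left (m - p) (a (j + 1) / (C₁ + 1))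
    rw [hx₁def]; linarith [hδ₁def ▸ this]
  have hx₁p : p < x₁ := by rw [hx₁def]; linarith
  have hx₁I : x₁ ∈ Set.Ioo p q := ⟨hx₁p, lt_of_le_of_lt hx₁m hm2⟩
  have hs₁ := GP_summable ha hsum hbtop x₁
  have hterm₁ : C₁ + 1 ≤ a (j + 1) / (x₁ + b (j + 1)) := by
    have he : x₁ + b (j + 1) = δ₁ := by rw [hx₁def, hp]; ring
    rw [he, le_div_iff₀ hδ₁]
    have h2 : δ₁ ≤ a (j + 1) / (C₁ + 1) := min_le_right _ _
    have h3 : (C₁ + 1) * δ₁ ≤ (C₁ + 1) * (a (j + 1) / (C₁ + 1)) := by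
      apply mul_le_mul_of_nonneg_left h2 (by linarith)
    rwa [mul_div_cancel₀ _ (by linarith : C₁ + 1 ≠ 0)] at h3
  have hrest₁ := hC₁ x₁ ⟨hx₁p.le, hx₁m⟩
  have hFx₁ : 0 < ∑' k, a k / (x₁ + b k) := by
    rw [Summable.tsum_eq_add_tsum_ite hs₁ (j + 1)]
    have := abs_le.mp hrest₁
    linarith [this.1]
  -- right point with negative value
  obtain ⟨C₂, hC₂0, hC₂⟩ := GP_rest ha hsum hbtop (p := m) (q := q) j (by
    intro k hki
    rcases lt_or_ge k j with hk | hk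
    · right
      have : b k < b j := hbmono hk
      rw [hq]; linarith
    · left
      have hk2 : j + 1 ≤ k := by omega
      have : b (j + 1) ≤ b k := hbmono.monotone hk2
      rw [hp] at hm1
      linarith)
  set δ₂ := min (q - m) (a j / (C₂ + 1)) with hδ₂def
  have hδ₂ : 0 < δ₂ := lt_min (by linarith) (div_pos (ha _) (by linarith))
  set x₂ := q - δ₂ with hx₂def
  have hx₂m : m ≤ x₂ := by
    have := min_le_left (q - m) (a j / (C₂ + 1))
    rw [hx₂def]; linarith [hδ₂def ▸ this]
  have hx₂q : x₂ < q := by rw [hx₂def]; linarith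
  have hx₂I : x₂ ∈ Set.Ioo p q := ⟨lt_of_lt_of_le hm1 hx₂m, hx₂q⟩
  have hs₂ := GP_summable ha hsum hbtop x₂
  have hterm₂ : a j / (x₂ + b j) ≤ -(C₂ + 1) := by
    have he : x₂ + b j = -δ₂ := by rw [hx₂def, hq]; ring
    rw [he, div_neg, neg_le_neg_iff, le_div_iff₀ hδ₂]
    have h2 : δ₂ ≤ a j / (C₂ + 1) := min_le_right _ _
    have h3 : (C₂ + 1) * δ₂ ≤ (C₂ + 1) * (a j / (C₂ + 1)) := by
      apply mul_le_mul_of_nonneg_left h2 (by linarith)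
    rwa [mul_div_cancel₀ _ (by linarith : C₂ + 1 ≠ 0)] at h3
  have hrest₂ := hC₂ x₂ ⟨hx₂m, hx₂q.le⟩
  have hFx₂ : (∑' k, a k / (x₂ + b k)) < 0 := by
    rw [Summable.tsum_eq_add_tsum_ite hs₂ j]
    have := abs_le.mp hrest₂
    linarith [this.2]
  -- intermediate value theorem
  have hx₁₂ : x₁ ≤ x₂ := le_trans hx₁m hx₂m
  have hcont : ContinuousOn (fun x => ∑' k, a k / (x + b k)) (Set.Icc x₁ x₂) := by
    apply GP_contOn ha hsum hbtop
    intro k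
    rcases le_or_gt k j with hk | hk
    · right
      have : b k ≤ b j := hbmono.monotone hk
      rw [hq] at hx₂q
      linarith
    · left
      have : b (j + 1) ≤ b k := hbmono.monotone hk
      rw [hp] at hx₁p
      linarith
  have h0mem : (0:ℝ) ∈ Set.Icc ((fun x => ∑' k, a k / (x + b k)) x₂)
      ((fun x => ∑' k, a k / (x + b k)) x₁) := ⟨hFx₂.le, hFx₁.le⟩
  obtain ⟨c, hc, hfc⟩ := intermediate_value_Icc' hx₁₂ hcont h0mem
  exact ⟨c, ⟨lt_of_lt_of_le hx₁p hc.1, lt_of_le_of_lt hc.2 hx₂q⟩, hfc⟩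

private lemma GP_real_eq (a b : ℕ → ℝ) (x : ℝ) :
    GPK a b (x : ℂ) = ((∑' k, a k / (x + b k) : ℝ) : ℂ) := by
  rw [GPK, Complex.ofReal_tsum]
  exact tsum_congr fun k => by push_cast; ring

end aux

/-- All zeros of `K` are real, there is exactly one zero `-μ_j` in each interval
`(-b_{j+1}, -b_j)`, and there are no other zeros in the domain of `K`. -/
theorem K_zeros_real_interlacing
    (a b : ℕ → ℝ) (α : ℝ)
    (ha : ∀ k, 0 < a k) (hα : 0 < α) (hsum : HasSum a (α ^ 2))
    (hb0 : 0 ≤ b 0) (hbmono : StrictMono b) (hbtop : Tendsto b atTop atTop) :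
    -- all zeros of K are real
    (∀ z : ℂ, (∀ k, z ≠ -(b k : ℂ)) → GPK a b z = 0 → z.im = 0) ∧
    -- exactly one zero in each interval (-b_{j+1}, -b_j)
    (∀ j : ℕ, ∃! x : ℝ, x ∈ Set.Ioo (-(b (j + 1))) (-(b j)) ∧ GPK a b (x : ℂ) = 0) ∧
    -- no other zeros: every real zero lies in one of these intervals
    (∀ x : ℝ, (∀ k, x ≠ -(b k)) → GPK a b (x : ℂ) = 0 →
      ∃ j : ℕ, x ∈ Set.Ioo (-(b (j + 1))) (-(b j))) := by
  refine ⟨?_, ?_, ?_⟩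
  · -- real zeros
    intro z hz h0
    have hSc := GP_summableC ha hsum hbtop z
    have him : (GPK a b z).im = ∑' k, ((a k : ℂ) / (z + (b k : ℂ))).im := by
      rw [GPK]
      exact Complex.imCLM.map_tsum hSc
    have him2 : (GPK a b z).im = -(z.im * ∑' k, a k / Complex.normSq (z + (b k : ℂ))) := by
      rw [him]
      rw [show (fun k => ((a k : ℂ) / (z + (b k : ℂ))).im)
          = fun k => -(z.im * (a k / Complex.normSq (z + (b k : ℂ)))) from
        funext fun k => by
          rw [Complex.div_im]
          simp [Complex.add_im, Complex.add_re]
          ring]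
      rw [tsum_neg, tsum_mul_left]
    have hS : 0 < ∑' k, a k / Complex.normSq (z + (b k : ℂ)) := by
      refine Summable.tsum_pos (GP_summable_normSq ha hsum hbtop z)
        (fun k => div_nonneg (ha k).le (Complex.normSq_nonneg _)) 0 ?_
      refine div_pos (ha 0) ?_
      rw [Complex.normSq_pos]
      intro h
      exact hz 0 (eq_neg_of_add_eq_zero_left h)
    rw [h0] at him2
    simp only [Complex.zero_im] at him2
    have : z.im * ∑' k, a k / Complex.normSq (z + (b k : ℂ)) = 0 := by linarith
    rcases mul_eq_zero.mp this with h | h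
    · exact h
    · exact absurd h hS.ne'
  · -- exactly one zero in each interval
    intro j
    obtain ⟨x, hxI, hx0⟩ := GP_exists_zero ha hsum hbmono hbtop j
    refine ⟨x, ⟨hxI, by rw [GP_real_eq, hx0, Complex.ofReal_zero]⟩, ?_⟩
    rintro y ⟨hyI, hy0⟩
    have hy0' : (∑' k, a k / (y + b k)) = 0 := by
      rw [GP_real_eq] at hy0
      exact_mod_cast hy0
    exact (GP_anti ha hsum hbmono hbtop j).injOn hyI hxI (hy0'.trans hx0.symm)
  · -- no other zeros
    intro x hx hx0
    have hx0' : (∑' k, a k / (x + b k)) = 0 := by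
      rw [GP_real_eq] at hx0
      exact_mod_cast hx0
    rcases lt_trichotomy x (-(b 0)) with hlt | heq | hgt
    · -- find the interval
      have hex : ∃ n, -(b n) < x := by
        obtain ⟨n, hn⟩ := (hbtop.eventually_gt_atTop (-x)).exists
        exact ⟨n, by linarith⟩
      classical
      set m := Nat.find hex with hmdef
      have hmspec : -(b m) < x := Nat.find_spec hex
      have hm0 : m ≠ 0 := by
        intro h
        rw [h] at hmspec
        linarith
      refine ⟨m - 1, ?_, ?_⟩
      · have : m - 1 + 1 = m := Nat.succ_pred_eq_of_ne_zero hm0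
        rw [this]
        exact hmspec
      · have hmin : ¬(-(b (m - 1)) < x) := Nat.find_min hex (by omega)
        have hle : x ≤ -(b (m - 1)) := not_lt.mp hmin
        exact lt_of_le_of_ne hle (hx (m - 1))
    · exact absurd heq (hx 0)
    · -- x > -b 0 : K(x) > 0, contradiction
      exfalso
      have hpos : 0 < ∑' k, a k / (x + b k) := by
        refine Summable.tsum_pos (GP_summable ha hsum hbtop x) (fun k => ?_) 0 ?_
        · have : b 0 ≤ b k := hbmono.monotone (Nat.zero_le k)
          exact (div_pos (ha k) (by linarith)).le
        · exact div_pos (ha 0) (by linarith)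
      rw [hx0'] at hpos
      exact lt_irrefl 0 hpos
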